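/- Let M ≥ 2 be an integer. There exists a real Y₀ (depending on M) such that the following holds for all real Y ≥ Y₀. Let S be a set of M positive integers, each at most Y, such that for all distinct d, d' ∈ S one has |log d − log d'| > 1. Let V and W be reals with V ≤ √Y and 1 ≤ W ≤ V/(log Y)^{M+5}. Then the number of integers k with Y ≤ k < 2Y for which there exist distinct d, d' ∈ S, a real ω with |ω| < W, and nonzero integers m, m' with |ω·log(d·k+1) − m| ≤ 1/V and |ω·log(d'·k+1) − m'| ≤ 1/V, is at most 1200·binomial(M,2)·(W/V)·Y·(log Y)^4. -/

import Mathlib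

set_option maxHeartbeats 1000000

private lemma log_sub_le {a b : ℝ} (ha : 0 < a) (hab : a ≤ b) :
    Real.log b - Real.log a ≤ (b - a) / a := by
  have hb : 0 < b := lt_of_lt_of_le ha hab
  have h := Real.log_le_sub_one_of_pos (div_pos hb ha)
  rw [Real.log_div hb.ne' ha.ne'] at h
  have : b / a - 1 = (b - a) / a := by field_simp
  linarith

private lemma log_sub_ge {a b : ℝ} (ha : 0 < a) (hab : a ≤ b) :
    (b - a) / b ≤ Real.log b - Real.log a := by
  have hb : 0 < b := lt_of_lt_of_le ha hab
  have h := Real.log_le_sub_one_of_pos (div_pos ha hb)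
  rw [Real.log_div ha.ne' hb.ne'] at h
  have h2 : a / b - 1 = -((b - a) / b) := by field_simp; ring
  linarith

/-- counting a finset of naturals that is pairwise within distance `l`. -/
private lemma card_of_close (T : Finset ℕ) (l : ℝ) (hl : 0 ≤ l)
    (h : ∀ a ∈ T, ∀ b ∈ T, (a : ℝ) - b ≤ l) : (T.card : ℝ) ≤ l + 1 := by
  rcases T.eq_empty_or_nonempty with rfl | hT
  · simp; linarith
  · have hmax := T.max'_mem hT
    have hmin := T.min'_mem hT
    have hsub : T ⊆ Finset.Icc (T.min' hT) (T.max' hT) :=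
      fun k hk => Finset.mem_Icc.mpr ⟨T.min'_le k hk, T.le_max' k hk⟩
    have hc := Finset.card_le_card hsub
    rw [Nat.card_Icc] at hc
    have hle : T.min' hT ≤ T.max' hT := T.min'_le _ hmax
    have h2 : ((T.max' hT : ℝ)) - (T.min' hT) ≤ l := h _ hmax _ hmin
    have h3 : (T.card : ℝ) ≤ ((T.max' hT + 1 - T.min' hT : ℕ) : ℝ) := by exact_mod_cast hc
    rw [Nat.cast_sub (by omega)] at h3
    push_cast at h3
    linarith

/-- bounds for `log (e t + 1)` for `t ∈ [Y, 2Y]`, `1 ≤ e ≤ Y`. -/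
private lemma Lb_aux {Y : ℝ} (hY0 : 0 < Y) (hY101 : 101 ≤ Y)
    {e : ℕ} (he : 1 ≤ e) (heY : (e : ℝ) ≤ Y) {t : ℝ} (h1 : Y ≤ t) (h2 : t ≤ 2 * Y) :
    0 < (e : ℝ) * t + 1 ∧ Real.log Y ≤ Real.log ((e : ℝ) * t + 1) ∧
      Real.log ((e : ℝ) * t + 1) ≤ 3 * Real.log Y := by
  have he1 : (1 : ℝ) ≤ (e : ℝ) := by exact_mod_cast he
  have ht0 : (0 : ℝ) < t := by linarith
  have het : t ≤ (e : ℝ) * t := by nlinarith [mul_le_mul_of_nonneg_right he1 ht0.le]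
  have hpos : 0 < (e : ℝ) * t + 1 := by linarith
  refine ⟨hpos, Real.log_le_log hY0 (by linarith), ?_⟩
  have h3 : (e : ℝ) * t + 1 ≤ Y ^ 3 := by
    have h5 : (e : ℝ) * t ≤ Y * (2 * Y) :=
      mul_le_mul heY h2 (by linarith) (by linarith)
    nlinarith [mul_nonneg (sq_nonneg Y) (show (0:ℝ) ≤ Y - 101 by linarith)]
  have h4 := Real.log_le_log hpos h3
  rwa [Real.log_pow, Nat.cast_ofNat] at h4

/-- comparing `log (f t + 1) - log (e t + 1)` with `log f - log e` for `e ≤ f`. -/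
private lemma ord_aux {Y : ℝ} (hY0 : 0 < Y) {e f : ℕ} (he : 1 ≤ e) (hf : 1 ≤ f)
    (hef : e ≤ f) {t : ℝ} (ht : Y ≤ t) :
    Real.log (f : ℝ) - Real.log (e : ℝ) - 1 / Y ≤
      Real.log ((f : ℝ) * t + 1) - Real.log ((e : ℝ) * t + 1) ∧
    Real.log ((f : ℝ) * t + 1) - Real.log ((e : ℝ) * t + 1) ≤
      Real.log (f : ℝ) - Real.log (e : ℝ) := by
  have he1 : (1 : ℝ) ≤ (e : ℝ) := by exact_mod_cast he
  have hf1 : (1 : ℝ) ≤ (f : ℝ) := by exact_mod_cast hf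
  have hefR : (e : ℝ) ≤ (f : ℝ) := by exact_mod_cast hef
  have ht0 : (0 : ℝ) < t := by linarith
  have hpe : 0 < (e : ℝ) * t + 1 := by nlinarith [mul_le_mul_of_nonneg_right he1 ht0.le]
  have hpf : 0 < (f : ℝ) * t + 1 := by nlinarith [mul_le_mul_of_nonneg_right hf1 ht0.le]
  constructor
  · have h1 := Real.log_le_sub_one_of_pos
      (show 0 < ((f : ℝ) * ((e : ℝ) * t + 1)) / ((e : ℝ) * ((f : ℝ) * t + 1)) by positivity)
    rw [Real.log_div (by positivity) (by positivity), Real.log_mul (by positivity) hpe.ne',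
      Real.log_mul (by positivity) hpf.ne'] at h1
    have h2 : (f : ℝ) * ((e : ℝ) * t + 1) / ((e : ℝ) * ((f : ℝ) * t + 1)) - 1
        = ((f : ℝ) - e) / ((e : ℝ) * ((f : ℝ) * t + 1)) := by
      field_simp; ring
    have h3 : ((f : ℝ) - e) / ((e : ℝ) * ((f : ℝ) * t + 1)) ≤ 1 / Y := by
      rw [div_le_div_iff₀ (by positivity) hY0]
      nlinarith [mul_le_mul_of_nonneg_left ht (by positivity : (0:ℝ) ≤ (f:ℝ)),
        mul_le_mul_of_nonneg_right he1 (by positivity : (0:ℝ) ≤ (f:ℝ) * t),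
        mul_pos (by positivity : (0:ℝ) < (e:ℝ)) hY0]
    linarith
  · have h1 : Real.log ((e : ℝ) * ((f : ℝ) * t + 1)) ≤
        Real.log ((f : ℝ) * ((e : ℝ) * t + 1)) := by
      apply Real.log_le_log (by positivity)
      nlinarith [hefR, ht0]
    rw [Real.log_mul (by positivity) hpf.ne', Real.log_mul (by positivity) hpe.ne'] at h1
    linarith

/-- the increment of `log (e t + 1)` between `t₁` and `t₂` compared to `log t₂ - log t₁`. -/
private lemma delta_aux {Y t₁ t₂ : ℝ} (hY0 : 0 < Y) {e : ℕ} (he : 1 ≤ e)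
    (ht1 : Y ≤ t₁) (ht12 : t₁ ≤ t₂) :
    0 ≤ (Real.log t₂ - Real.log t₁) - (Real.log ((e : ℝ) * t₂ + 1) - Real.log ((e : ℝ) * t₁ + 1)) ∧
    Y ^ 2 * ((Real.log t₂ - Real.log t₁) -
      (Real.log ((e : ℝ) * t₂ + 1) - Real.log ((e : ℝ) * t₁ + 1))) ≤ t₂ - t₁ := by
  have he1 : (1 : ℝ) ≤ (e : ℝ) := by exact_mod_cast he
  have ht₁0 : (0 : ℝ) < t₁ := by linarith
  have ht₂0 : (0 : ℝ) < t₂ := by linarith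
  have δ0 : (0 : ℝ) ≤ t₂ - t₁ := by linarith
  have het1 : t₁ ≤ (e : ℝ) * t₁ := by nlinarith [mul_le_mul_of_nonneg_right he1 ht₁0.le]
  have het2 : t₂ ≤ (e : ℝ) * t₂ := by nlinarith [mul_le_mul_of_nonneg_right he1 ht₂0.le]
  have hpe1 : 0 < (e : ℝ) * t₁ + 1 := by linarith
  have hpe2 : 0 < (e : ℝ) * t₂ + 1 := by linarith
  have hkey : t₁ * ((e : ℝ) * t₂ + 1) ≤ t₂ * ((e : ℝ) * t₁ + 1) := by
    have heq1 : t₁ * ((e : ℝ) * t₂ + 1) = (e : ℝ) * (t₁ * t₂) + t₁ := by ring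
    have heq2 : t₂ * ((e : ℝ) * t₁ + 1) = (e : ℝ) * (t₁ * t₂) + t₂ := by ring
    rw [heq1, heq2]; linarith
  constructor
  · have h1 : Real.log (t₁ * ((e : ℝ) * t₂ + 1)) ≤ Real.log (t₂ * ((e : ℝ) * t₁ + 1)) :=
      Real.log_le_log (mul_pos ht₁0 hpe2) hkey
    rw [Real.log_mul ht₁0.ne' hpe2.ne', Real.log_mul ht₂0.ne' hpe1.ne'] at h1
    linarith
  · have h1 := Real.log_le_sub_one_of_pos
      (show 0 < (t₂ * ((e : ℝ) * t₁ + 1)) / (t₁ * ((e : ℝ) * t₂ + 1)) by positivity)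
    rw [Real.log_div (by positivity) (by positivity), Real.log_mul ht₂0.ne' hpe1.ne',
      Real.log_mul ht₁0.ne' hpe2.ne'] at h1
    have h2 : (t₂ * ((e : ℝ) * t₁ + 1)) / (t₁ * ((e : ℝ) * t₂ + 1)) - 1
        = (t₂ - t₁) / (t₁ * ((e : ℝ) * t₂ + 1)) := by field_simp; ring
    have hY2 : Y ^ 2 ≤ t₁ * ((e : ℝ) * t₂ + 1) := by
      have h6 : Y ≤ (e : ℝ) * t₂ + 1 := by linarith
      calc Y ^ 2 = Y * Y := sq Y
        _ ≤ t₁ * ((e : ℝ) * t₂ + 1) := mul_le_mul ht1 h6 hY0.le (by linarith)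
    have h3 : (t₂ - t₁) / (t₁ * ((e : ℝ) * t₂ + 1)) ≤ (t₂ - t₁) / Y ^ 2 := by
      apply div_le_div_of_nonneg_left δ0 (by positivity) hY2
    have h4 : Y ^ 2 * ((t₂ - t₁) / Y ^ 2) = t₂ - t₁ := by field_simp
    have h5 : (Real.log t₂ - Real.log t₁) -
        (Real.log ((e : ℝ) * t₂ + 1) - Real.log ((e : ℝ) * t₁ + 1)) ≤ (t₂ - t₁) / Y ^ 2 := by
      linarith
    have h7 := mul_le_mul_of_nonneg_left h5 (sq_nonneg Y)
    linarith

/-- purely algebraic core estimate. -/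
private lemma core_aux {Y x δ L1 L2 L1' L2' A : ℝ} (m : ℤ)
    (hx : 100 ≤ x) (hYx : 120 * x ≤ Y) (hδ : 0 ≤ δ)
    (hL1 : x ≤ L1) (hL1' : x ≤ L1') (hL2 : x ≤ L2) (hL2' : x ≤ L2')
    (hL1a : L1 ≤ 3 * x) (hL1'a : L1' ≤ 3 * x) (hL2a : L2 ≤ 3 * x) (hL2'a : L2' ≤ 3 * x)
    (hs1 : 1 / 2 ≤ |L1 - L1'|) (hs2 : |L1 - L1'| ≤ x)
    (hA0 : 0 ≤ A) (hA1 : δ ≤ 2 * Y * A) (hA2 : Y * A ≤ δ)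
    (hu0 : 0 ≤ A - (L2 - L1)) (hu2 : Y ^ 2 * (A - (L2 - L1)) ≤ δ)
    (hu'0 : 0 ≤ A - (L2' - L1')) (hu'2 : Y ^ 2 * (A - (L2' - L1')) ≤ δ) :
    |(m : ℝ)| * δ / (45 * Y * x ^ 2) ≤ |(m : ℝ) * L2' / L2 - (m : ℝ) * L1' / L1| ∧
      |(m : ℝ) * L2' / L2 - (m : ℝ) * L1' / L1| ≤ 3 * |(m : ℝ)| * δ / (Y * x) := by
  have hx0 : (0 : ℝ) < x := by linarith
  have hY0 : (0 : ℝ) < Y := by linarith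
  have hL10 : (0 : ℝ) < L1 := by linarith
  have hL20 : (0 : ℝ) < L2 := by linarith
  have hL1'0 : (0 : ℝ) < L1' := by linarith
  set u := A - (L2 - L1) with hudef
  set u' := A - (L2' - L1') with hu'def
  set N := L2' * L1 - L1' * L2 with hNdef
  have hNid : N = A * (L1 - L1') - u' * L1 + u * L1' := by
    simp only [hNdef, hudef, hu'def]; ring
  -- N lower bound
  have hNlow : δ ≤ 5 * Y * |N| := by
    rcases abs_cases (L1 - L1') with ⟨heq, hge⟩ | ⟨heq, hge⟩
    · have hss : 1 / 2 ≤ L1 - L1' := by rw [← heq]; exact hs1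
      have hN1 : δ ≤ 5 * Y * N := by
        rw [hNid]
        nlinarith [mul_nonneg (mul_nonneg hY0.le hA0) (by linarith : (0:ℝ) ≤ L1 - L1' - 1/2),
          mul_nonneg (mul_nonneg hY0.le hu'0) (by linarith : (0:ℝ) ≤ 3*x - L1),
          mul_nonneg (mul_nonneg hY0.le hu0) hL1'0.le,
          mul_nonneg (mul_nonneg hu'0 (by linarith : (0:ℝ) ≤ Y - 120*x)) hY0.le]
      nlinarith [mul_nonneg (by positivity : (0:ℝ) ≤ 5*Y) (sub_nonneg.2 (le_abs_self N))]
    · have hss : 1 / 2 ≤ L1' - L1 := by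
        have := hs1; rw [heq] at this; linarith
      have hN1 : δ ≤ 5 * Y * (-N) := by
        rw [hNid]
        nlinarith [mul_nonneg (mul_nonneg hY0.le hA0) (by linarith : (0:ℝ) ≤ L1' - L1 - 1/2),
          mul_nonneg (mul_nonneg hY0.le hu0) (by linarith : (0:ℝ) ≤ 3*x - L1'),
          mul_nonneg (mul_nonneg hY0.le hu'0) hL10.le,
          mul_nonneg (mul_nonneg hu0 (by linarith : (0:ℝ) ≤ Y - 120*x)) hY0.le]
      nlinarith [mul_nonneg (by positivity : (0:ℝ) ≤ 5*Y) (sub_nonneg.2 (neg_le_abs N))]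
  -- N upper bound
  have hNup : Y * |N| ≤ 3 * x * δ := by
    obtain ⟨hsa, hsb⟩ := abs_le.mp hs2
    have hup : Y * N ≤ 3 * x * δ := by
      rw [hNid]
      nlinarith [mul_nonneg (mul_nonneg hY0.le hA0) (by linarith : (0:ℝ) ≤ x - (L1 - L1')),
        mul_nonneg (mul_nonneg hY0.le hu'0) hL10.le,
        mul_nonneg (mul_nonneg hY0.le hu0) (by linarith : (0:ℝ) ≤ 3*x - L1'),
        mul_nonneg (mul_nonneg hu0 (by linarith : (0:ℝ) ≤ Y - 120*x)) hY0.le,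
        mul_nonneg hδ (by linarith : (0:ℝ) ≤ 2*x - 1/40)]
    have hlo : -(3 * x * δ) ≤ Y * N := by
      rw [hNid]
      nlinarith [mul_nonneg (mul_nonneg hY0.le hA0) (by linarith : (0:ℝ) ≤ (L1 - L1') + x),
        mul_nonneg (mul_nonneg hY0.le hu0) hL1'0.le,
        mul_nonneg (mul_nonneg hY0.le hu'0) (by linarith : (0:ℝ) ≤ 3*x - L1),
        mul_nonneg (mul_nonneg hu'0 (by linarith : (0:ℝ) ≤ Y - 120*x)) hY0.le,
        mul_nonneg hδ (by linarith : (0:ℝ) ≤ 2*x - 1/40)]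
    rcases abs_cases N with ⟨heq, _⟩ | ⟨heq, _⟩ <;> rw [heq] <;> linarith
  -- conversion to the quotients
  have h9 : L1 * L2 ≤ 9 * x ^ 2 := by nlinarith
  have hx2 : x ^ 2 ≤ L1 * L2 := by nlinarith
  have hgid : (m : ℝ) * L2' / L2 - (m : ℝ) * L1' / L1 = (m : ℝ) * N / (L1 * L2) := by
    rw [hNdef]; field_simp
  rw [hgid, abs_div, abs_mul, abs_of_pos (mul_pos hL10 hL20)]
  constructor
  · rw [div_le_div_iff₀ (by positivity) (by positivity)]
    nlinarith [mul_nonneg (mul_nonneg (abs_nonneg (m : ℝ)) hδ)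
        (by linarith : (0:ℝ) ≤ 9*x^2 - L1*L2),
      mul_nonneg (by positivity : (0:ℝ) ≤ 9*x^2*|(m:ℝ)|)
        (by linarith : (0:ℝ) ≤ 5*Y*|N| - δ)]
  · rw [div_le_div_iff₀ (by positivity) (by positivity)]
    nlinarith [mul_nonneg (mul_nonneg (abs_nonneg (m : ℝ)) (abs_nonneg N))
        (by linarith : (0:ℝ) ≤ L1*L2 - x^2),
      mul_nonneg (mul_nonneg hx0.le (abs_nonneg (m:ℝ)))
        (by linarith : (0:ℝ) ≤ 3*x*δ - Y*|N|),
      mul_nonneg (mul_nonneg (abs_nonneg (m:ℝ)) hδ)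
        (by linarith : (0:ℝ) ≤ L1*L2 - x^2)]

private lemma Y_facts {Y : ℝ} (hY : Real.exp 100 ≤ Y) :
    0 < Y ∧ 101 ≤ Y ∧ 100 ≤ Real.log Y ∧ 120 * Real.log Y ≤ Y := by
  have hY0 : (0 : ℝ) < Y := (Real.exp_pos 100).trans_le hY
  have hY101 : (101 : ℝ) ≤ Y := by
    have := Real.add_one_le_exp (100 : ℝ); linarith
  have hx : (100 : ℝ) ≤ Real.log Y := by
    rw [← Real.log_exp 100]
    exact Real.log_le_log (Real.exp_pos 100) hY
  refine ⟨hY0, hY101, hx, ?_⟩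
  have h1 : Real.log Y / 3 + 1 ≤ Real.exp (Real.log Y / 3) := Real.add_one_le_exp _
  have h2 : Real.exp (Real.log Y / 3) ^ 3 = Real.exp (Real.log Y) := by
    rw [← Real.exp_nat_mul]; push_cast; ring_nf
  have h3 : Real.exp (Real.log Y) = Y := Real.exp_log hY0
  have h4 : (Real.log Y / 3 + 1) ^ 3 ≤ Real.exp (Real.log Y / 3) ^ 3 :=
    pow_le_pow_left₀ (by positivity) h1 3
  nlinarith [sq_nonneg (Real.log Y)]

private lemma increment_bounds {Y t₁ t₂ : ℝ} {d d' : ℕ} (m : ℤ)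
    (hY : Real.exp 100 ≤ Y)
    (hd : 1 ≤ d) (hd' : 1 ≤ d') (hdY : (d : ℝ) ≤ Y) (hd'Y : (d' : ℝ) ≤ Y)
    (hsp : 1 < |Real.log d - Real.log d'|)
    (ht1 : Y ≤ t₁) (ht12 : t₁ ≤ t₂) (ht2 : t₂ ≤ 2 * Y) :
    |(m : ℝ)| * (t₂ - t₁) / (45 * Y * Real.log Y ^ 2) ≤
        |(m : ℝ) * Real.log ((d' : ℝ) * t₂ + 1) / Real.log ((d : ℝ) * t₂ + 1)
          - (m : ℝ) * Real.log ((d' : ℝ) * t₁ + 1) / Real.log ((d : ℝ) * t₁ + 1)| ∧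
      |(m : ℝ) * Real.log ((d' : ℝ) * t₂ + 1) / Real.log ((d : ℝ) * t₂ + 1)
          - (m : ℝ) * Real.log ((d' : ℝ) * t₁ + 1) / Real.log ((d : ℝ) * t₁ + 1)| ≤
        3 * |(m : ℝ)| * (t₂ - t₁) / (Y * Real.log Y) := by
  obtain ⟨hY0, hY101, hx, hYx⟩ := Y_facts hY
  set x := Real.log Y with hxdef
  have hd1 : (1 : ℝ) ≤ (d : ℝ) := by exact_mod_cast hd
  have hd'1 : (1 : ℝ) ≤ (d' : ℝ) := by exact_mod_cast hd'
  have ht₁0 : (0 : ℝ) < t₁ := by linarith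
  have ht₂0 : (0 : ℝ) < t₂ := by linarith
  have δ0 : (0 : ℝ) ≤ t₂ - t₁ := by linarith
  obtain ⟨-, hL1b, hL1a⟩ := Lb_aux hY0 hY101 hd hdY ht1 (by linarith)
  obtain ⟨-, hL2b, hL2a⟩ := Lb_aux hY0 hY101 hd hdY (le_trans ht1 ht12) ht2
  obtain ⟨-, hL1'b, hL1'a⟩ := Lb_aux hY0 hY101 hd' hd'Y ht1 (by linarith)
  obtain ⟨-, hL2'b, hL2'a⟩ := Lb_aux hY0 hY101 hd' hd'Y (le_trans ht1 ht12) ht2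
  set L1 := Real.log ((d : ℝ) * t₁ + 1) with hL1def
  set L2 := Real.log ((d : ℝ) * t₂ + 1) with hL2def
  set L1' := Real.log ((d' : ℝ) * t₁ + 1) with hL1'def
  set L2' := Real.log ((d' : ℝ) * t₂ + 1) with hL2'def
  -- spread bounds at t₁
  have hlogd : Real.log (d : ℝ) ≤ x ∧ 0 ≤ Real.log (d : ℝ) :=
    ⟨Real.log_le_log (by linarith) hdY, Real.log_nonneg hd1⟩
  have hlogd' : Real.log (d' : ℝ) ≤ x ∧ 0 ≤ Real.log (d' : ℝ) :=
    ⟨Real.log_le_log (by linarith) hd'Y, Real.log_nonneg hd'1⟩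
  have hYhalf : (1 : ℝ) / Y ≤ 1 / 2 := by
    rw [div_le_div_iff₀ hY0 (by norm_num)]; linarith
  have hs : 1 / 2 ≤ |L1 - L1'| ∧ |L1 - L1'| ≤ x := by
    rcases le_total d d' with hdd | hdd
    · obtain ⟨ha, hb⟩ := ord_aux hY0 hd hd' hdd ht1
      have hll : Real.log (d : ℝ) ≤ Real.log (d' : ℝ) :=
        Real.log_le_log (by linarith) (by exact_mod_cast hdd)
      have habs : |Real.log (d : ℝ) - Real.log (d' : ℝ)| =
          Real.log (d' : ℝ) - Real.log (d : ℝ) := by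
        rw [abs_sub_comm]; exact abs_of_nonneg (by linarith)
      rw [habs] at hsp
      have h1 : 1 / 2 ≤ L1' - L1 := by
        simp only [hL1def, hL1'def]; linarith
      have h2 : L1' - L1 ≤ x := by
        simp only [hL1def, hL1'def]; linarith [hlogd.2, hlogd'.1]
      rw [abs_sub_comm, abs_of_nonneg (by linarith)]
      exact ⟨h1, h2⟩
    · obtain ⟨ha, hb⟩ := ord_aux hY0 hd' hd hdd ht1
      have hll : Real.log (d' : ℝ) ≤ Real.log (d : ℝ) :=
        Real.log_le_log (by linarith) (by exact_mod_cast hdd)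
      have habs : |Real.log (d : ℝ) - Real.log (d' : ℝ)| =
          Real.log (d : ℝ) - Real.log (d' : ℝ) := abs_of_nonneg (by linarith)
      rw [habs] at hsp
      have h1 : 1 / 2 ≤ L1 - L1' := by
        simp only [hL1def, hL1'def]; linarith
      have h2 : L1 - L1' ≤ x := by
        simp only [hL1def, hL1'def]; linarith [hlogd'.2, hlogd.1]
      rw [abs_of_nonneg (by linarith)]
      exact ⟨h1, h2⟩
  -- A bounds
  set A := Real.log t₂ - Real.log t₁ with hAdef
  have hA0 : 0 ≤ A := by
    have := Real.log_le_log ht₁0 ht12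
    simp only [hAdef]; linarith
  have hA1 : t₂ - t₁ ≤ 2 * Y * A := by
    have h1 := log_sub_ge ht₁0 ht12
    have h2 : (t₂ - t₁) / t₂ * t₂ = t₂ - t₁ := by field_simp
    have h3 : A * t₂ ≤ A * (2 * Y) := mul_le_mul_of_nonneg_left ht2 hA0
    nlinarith [mul_le_mul_of_nonneg_right h1 ht₂0.le]
  have hA2 : Y * A ≤ t₂ - t₁ := by
    have h1 := log_sub_le ht₁0 ht12
    have h2 : (t₂ - t₁) / t₁ * t₁ = t₂ - t₁ := by field_simp
    have h3 : A * Y ≤ A * t₁ := mul_le_mul_of_nonneg_left ht1 hA0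
    nlinarith [mul_le_mul_of_nonneg_right h1 ht₁0.le]
  -- u bounds
  have hud := delta_aux hY0 hd ht1 ht12
  have hu'd := delta_aux hY0 hd' ht1 ht12
  rw [← hL1def, ← hL2def, ← hAdef] at hud
  rw [← hL1'def, ← hL2'def, ← hAdef] at hu'd
  exact core_aux m hx hYx δ0 hL1b hL1'b hL2b hL2'b hL1a hL1'a hL2a hL2'a hs.1 hs.2
    hA0 hA1 hA2 hud.1 hud.2 hu'd.1 hu'd.2

private noncomputable def gfun (a b : ℕ) (m : ℤ) (t : ℝ) : ℝ :=
  (m : ℝ) * Real.log ((b : ℝ) * t + 1) / Real.log ((a : ℝ) * t + 1)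

private lemma increment_bounds' {Y t₁ t₂ : ℝ} {d d' : ℕ} (m : ℤ)
    (hY : Real.exp 100 ≤ Y)
    (hd : 1 ≤ d) (hd' : 1 ≤ d') (hdY : (d : ℝ) ≤ Y) (hd'Y : (d' : ℝ) ≤ Y)
    (hsp : 1 < |Real.log d - Real.log d'|)
    (ht1 : Y ≤ t₁) (ht12 : t₁ ≤ t₂) (ht2 : t₂ ≤ 2 * Y) :
    |(m : ℝ)| * (t₂ - t₁) / (45 * Y * Real.log Y ^ 2) ≤
        |gfun d d' m t₂ - gfun d d' m t₁| ∧
      |gfun d d' m t₂ - gfun d d' m t₁| ≤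
        3 * |(m : ℝ)| * (t₂ - t₁) / (Y * Real.log Y) := by
  simpa [gfun] using increment_bounds m hY hd hd' hdY hd'Y hsp ht1 ht12 ht2

private noncomputable def Kfin (Y : ℝ) : Finset ℕ := Finset.Ico ⌈Y⌉₊ ⌈2 * Y⌉₊

open Classical in
private noncomputable def KfD (Y V : ℝ) (a b : ℕ) (m m' : ℤ) : Finset ℕ :=
  (Kfin Y).filter (fun k => |(m' : ℝ) - gfun a b m k| ≤ 4 / V)

private noncomputable def MiD (W x : ℝ) : Finset ℤ :=
  (Finset.Icc (-⌈4 * W * x⌉) ⌈4 * W * x⌉).erase 0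

private noncomputable def Mi'D (x Y : ℝ) (a b : ℕ) (m : ℤ) : Finset ℤ :=
  Finset.Icc ⌈gfun a b m Y - (3 * |(m : ℝ)| / x + 1)⌉
    ⌊gfun a b m Y + (3 * |(m : ℝ)| / x + 1)⌋

private noncomputable def FD (Y V W x : ℝ) (S : Finset ℕ) : Finset ℕ :=
  S.offDiag.biUnion (fun p => (MiD W x).biUnion (fun m =>
    (Mi'D x Y p.1 p.2 m).biUnion (fun m' => KfD Y V p.1 p.2 m m')))

private lemma Kfin_mem {Y : ℝ} (hY0 : 0 ≤ Y) {k : ℕ} (hk : k ∈ Kfin Y) :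
    Y ≤ (k : ℝ) ∧ (k : ℝ) < 2 * Y := by
  rw [Kfin, Finset.mem_Ico] at hk
  constructor
  · calc Y ≤ (⌈Y⌉₊ : ℝ) := Nat.le_ceil Y
      _ ≤ (k : ℝ) := by exact_mod_cast hk.1
  · exact Nat.lt_ceil.mp hk.2

/-- count of `k` with `m'` close to `gfun a b m k`. -/
private lemma KfD_bound {Y V : ℝ} {a b : ℕ} {m : ℤ} (m' : ℤ)
    (hY : Real.exp 100 ≤ Y) (hV : 0 < V)
    (ha : 1 ≤ a) (hb : 1 ≤ b) (haY : (a : ℝ) ≤ Y) (hbY : (b : ℝ) ≤ Y)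
    (hsp : 1 < |Real.log a - Real.log b|) (hm : m ≠ 0) :
    ((KfD Y V a b m m').card : ℝ) ≤ 360 * Y * Real.log Y ^ 2 / (V * |(m : ℝ)|) + 1 := by
  obtain ⟨hY0, hY101, hx, hYx⟩ := Y_facts hY
  have hx0 : (0 : ℝ) < Real.log Y := by linarith
  have hm1 : (1 : ℝ) ≤ |(m : ℝ)| := by
    have h := Int.one_le_abs (by exact hm)
    exact_mod_cast h
  have hm0R : (0 : ℝ) < |(m : ℝ)| := by linarith
  apply card_of_close
  · positivity
  · intro i hi j hj
    rw [KfD, Finset.mem_filter] at hi hj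
    obtain ⟨hiK, hic⟩ := hi
    obtain ⟨hjK, hjc⟩ := hj
    obtain ⟨hi1, hi2⟩ := Kfin_mem hY0.le hiK
    obtain ⟨hj1, hj2⟩ := Kfin_mem hY0.le hjK
    rcases le_total (i : ℝ) (j : ℝ) with hij | hij
    · have : (0 : ℝ) ≤ 360 * Y * Real.log Y ^ 2 / (V * |(m : ℝ)|) := by positivity
      linarith
    · have hinc := (increment_bounds' m hY ha hb haY hbY hsp hj1 hij hi2.le).1
      have h8 : |gfun a b m i - gfun a b m j| ≤ 8 / V := by
        have hd1 : gfun a b m i - gfun a b m j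
            = -((m' : ℝ) - gfun a b m i) + ((m' : ℝ) - gfun a b m j) := by ring
        calc |gfun a b m i - gfun a b m j|
            = |-((m' : ℝ) - gfun a b m i) + ((m' : ℝ) - gfun a b m j)| := by rw [← hd1]
          _ ≤ |-((m' : ℝ) - gfun a b m i)| + |(m' : ℝ) - gfun a b m j| := abs_add_le _ _
          _ = |(m' : ℝ) - gfun a b m i| + |(m' : ℝ) - gfun a b m j| := by rw [abs_neg]
          _ ≤ 4 / V + 4 / V := add_le_add hic hjc
          _ = 8 / V := by ring
      have h9 : |(m : ℝ)| * ((i : ℝ) - j) / (45 * Y * Real.log Y ^ 2) ≤ 8 / V :=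
        le_trans hinc h8
      rw [div_le_div_iff₀ (by positivity) hV] at h9
      rw [le_div_iff₀ (by positivity)]
      nlinarith [h9]

private lemma Mi'D_bound {x Y : ℝ} (a b : ℕ) {m : ℤ} (hx : 1 ≤ x) (hm : m ≠ 0) :
    ((Mi'D x Y a b m).card : ℝ) ≤ 9 * |(m : ℝ)| := by
  have hx0 : (0 : ℝ) < x := by linarith
  have hm1 : (1 : ℝ) ≤ |(m : ℝ)| := by
    have h := Int.one_le_abs (by exact hm)
    exact_mod_cast h
  rw [Mi'D, Int.card_Icc]
  set r := gfun a b m Y with hrdef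
  set c := 3 * |(m : ℝ)| / x + 1 with hcdef
  have hc0 : 0 ≤ c := by positivity
  have h1 : ((⌊r + c⌋ + 1 - ⌈r - c⌉ : ℤ) : ℝ) ≤ 2 * c + 1 := by
    push_cast
    have hf := Int.floor_le (r + c)
    have hcl := Int.le_ceil (r - c)
    linarith
  have h2 : (((⌊r + c⌋ + 1 - ⌈r - c⌉ : ℤ).toNat : ℕ) : ℝ) ≤ 2 * c + 1 := by
    rcases le_or_gt (⌊r + c⌋ + 1 - ⌈r - c⌉) 0 with h | h
    · rw [Int.toNat_of_nonpos h]; push_cast; positivity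
    · have := Int.toNat_of_nonneg h.le
      have h3 : (((⌊r + c⌋ + 1 - ⌈r - c⌉ : ℤ).toNat : ℕ) : ℝ)
          = ((⌊r + c⌋ + 1 - ⌈r - c⌉ : ℤ) : ℝ) := by exact_mod_cast congrArg (fun t : ℤ => (t : ℝ)) this
      rw [h3]; exact h1
  refine le_trans h2 ?_
  have h4 : 3 * |(m : ℝ)| / x ≤ 3 * |(m : ℝ)| := by
    rw [div_le_iff₀ hx0]
    nlinarith [abs_nonneg (m : ℝ)]
  rw [hcdef]
  linarith

private lemma MiD_card {W x : ℝ} (hW : 1 ≤ W) (hx : 100 ≤ x) :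
    ((MiD W x).card : ℝ) ≤ 9 * W * x := by
  have hx0 : (0 : ℝ) < x := by linarith
  have hWx : (100 : ℝ) ≤ W * x := by nlinarith
  have hM0 : (0 : ℝ) ≤ 4 * W * x := by nlinarith
  have hceil : (0 : ℤ) ≤ ⌈4 * W * x⌉ := Int.ceil_nonneg hM0
  have hceilR : ((⌈4 * W * x⌉ : ℤ) : ℝ) ≤ 4 * W * x + 1 := le_of_lt (Int.ceil_lt_add_one _)
  have h1 : (MiD W x).card ≤ (Finset.Icc (-⌈4 * W * x⌉) ⌈4 * W * x⌉).card :=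
    Finset.card_le_card (Finset.erase_subset _ _)
  rw [Int.card_Icc] at h1
  have h2 : (⌈4 * W * x⌉ + 1 - -⌈4 * W * x⌉ : ℤ) = 2 * ⌈4 * W * x⌉ + 1 := by ring
  rw [h2] at h1
  have h3 : (((2 * ⌈4 * W * x⌉ + 1 : ℤ).toNat : ℕ) : ℝ) = ((2 * ⌈4 * W * x⌉ + 1 : ℤ) : ℝ) := by
    have := Int.toNat_of_nonneg (by omega : (0:ℤ) ≤ 2 * ⌈4 * W * x⌉ + 1)
    exact_mod_cast congrArg (fun t : ℤ => (t : ℝ)) this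
  have h4 : ((MiD W x).card : ℝ) ≤ (((2 * ⌈4 * W * x⌉ + 1 : ℤ).toNat : ℕ) : ℝ) := by
    exact_mod_cast h1
  rw [h3] at h4
  push_cast at h4
  linarith

private lemma perm_bound {Y V W : ℝ} {a b : ℕ} {m : ℤ}
    (hY : Real.exp 100 ≤ Y) (hV : 0 < V) (hW : 1 ≤ W)
    (ha : 1 ≤ a) (hb : 1 ≤ b) (haY : (a : ℝ) ≤ Y) (hbY : (b : ℝ) ≤ Y)
    (hsp : 1 < |Real.log a - Real.log b|)
    (hm : m ≠ 0) (hmabs : |(m : ℝ)| ≤ 4 * W * Real.log Y + 1) :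
    (((Mi'D (Real.log Y) Y a b m).biUnion (fun m' => KfD Y V a b m m')).card : ℝ) ≤
      3240 * Y * Real.log Y ^ 2 / V + 45 * W * Real.log Y := by
  obtain ⟨hY0, hY101, hx, hYx⟩ := Y_facts hY
  set x := Real.log Y with hxdef
  have hx0 : (0 : ℝ) < x := by linarith
  have hm1 : (1 : ℝ) ≤ |(m : ℝ)| := by
    have h := Int.one_le_abs (by exact hm)
    exact_mod_cast h
  have hmne : |(m : ℝ)| ≠ 0 := by positivity
  have h1 : (((Mi'D x Y a b m).biUnion (fun m' => KfD Y V a b m m')).card : ℝ) ≤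
      ∑ m' ∈ Mi'D x Y a b m, ((KfD Y V a b m m').card : ℝ) := by
    exact_mod_cast Finset.card_biUnion_le
  have h2 : ∑ m' ∈ Mi'D x Y a b m, ((KfD Y V a b m m').card : ℝ) ≤
      ∑ _m' ∈ Mi'D x Y a b m, (360 * Y * x ^ 2 / (V * |(m : ℝ)|) + 1) :=
    Finset.sum_le_sum (fun m' _ => KfD_bound m' hY hV ha hb haY hbY hsp hm)
  rw [Finset.sum_const, nsmul_eq_mul] at h2
  have h3 : ((Mi'D x Y a b m).card : ℝ) ≤ 9 * |(m : ℝ)| := Mi'D_bound a b (by linarith) hm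
  have h4 : ((Mi'D x Y a b m).card : ℝ) * (360 * Y * x ^ 2 / (V * |(m : ℝ)|) + 1) ≤
      9 * |(m : ℝ)| * (360 * Y * x ^ 2 / (V * |(m : ℝ)|) + 1) :=
    mul_le_mul_of_nonneg_right h3 (by positivity)
  have h5 : 9 * |(m : ℝ)| * (360 * Y * x ^ 2 / (V * |(m : ℝ)|) + 1)
      = 3240 * Y * x ^ 2 / V + 9 * |(m : ℝ)| := by
    field_simp
    ring
  have h6 : 9 * |(m : ℝ)| ≤ 45 * W * x := by
    nlinarith [mul_le_mul hW (by linarith : (1:ℝ) ≤ x) (by norm_num) (by linarith : (0:ℝ) ≤ W)]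
  linarith

private lemma FD_bound {Y V W : ℝ} {S : Finset ℕ}
    (hY : Real.exp 100 ≤ Y) (hV : 0 < V) (hW : 1 ≤ W)
    (hSmem : ∀ d ∈ S, 0 < d ∧ (d : ℝ) ≤ Y)
    (hSsp : ∀ d ∈ S, ∀ d' ∈ S, d ≠ d' → 1 < |Real.log d - Real.log d'|) :
    ((FD Y V W (Real.log Y) S).card : ℝ) ≤ (S.offDiag.card : ℝ) *
      (9 * W * Real.log Y * (3240 * Y * Real.log Y ^ 2 / V + 45 * W * Real.log Y)) := by
  obtain ⟨hY0, hY101, hx, hYx⟩ := Y_facts hY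
  set x := Real.log Y with hxdef
  have hx0 : (0 : ℝ) < x := by linarith
  have hB0 : (0 : ℝ) ≤ 3240 * Y * x ^ 2 / V + 45 * W * x := by positivity
  have hinner : ∀ p ∈ S.offDiag, (((MiD W x).biUnion (fun m =>
      (Mi'D x Y p.1 p.2 m).biUnion (fun m' => KfD Y V p.1 p.2 m m'))).card : ℝ) ≤
      9 * W * x * (3240 * Y * x ^ 2 / V + 45 * W * x) := by
    intro p hp
    rw [Finset.mem_offDiag] at hp
    obtain ⟨hp1, hp2, hp12⟩ := hp
    obtain ⟨ha1, haY⟩ := hSmem p.1 hp1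
    obtain ⟨hb1, hbY⟩ := hSmem p.2 hp2
    have h1 : (((MiD W x).biUnion (fun m =>
        (Mi'D x Y p.1 p.2 m).biUnion (fun m' => KfD Y V p.1 p.2 m m'))).card : ℝ) ≤
        ∑ m ∈ MiD W x, (((Mi'D x Y p.1 p.2 m).biUnion
          (fun m' => KfD Y V p.1 p.2 m m')).card : ℝ) := by
      exact_mod_cast Finset.card_biUnion_le
    have h2 : ∀ m ∈ MiD W x, (((Mi'D x Y p.1 p.2 m).biUnion
        (fun m' => KfD Y V p.1 p.2 m m')).card : ℝ) ≤
        3240 * Y * x ^ 2 / V + 45 * W * x := by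
      intro m hm
      rw [MiD, Finset.mem_erase, Finset.mem_Icc] at hm
      have hm0 := hm.1
      have hmlo := hm.2.1
      have hmhi := hm.2.2
      have hmabs : |(m : ℝ)| ≤ 4 * W * x + 1 := by
        have h3 : |m| ≤ ⌈4 * W * x⌉ := abs_le.mpr ⟨hmlo, hmhi⟩
        have h4 : ((|m| : ℤ) : ℝ) ≤ ((⌈4 * W * x⌉ : ℤ) : ℝ) := by exact_mod_cast h3
        have h5 : ((⌈4 * W * x⌉ : ℤ) : ℝ) ≤ 4 * W * x + 1 := le_of_lt (Int.ceil_lt_add_one _)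
        have h6 : |(m : ℝ)| = ((|m| : ℤ) : ℝ) := by push_cast; rfl
        rw [h6]; linarith
      exact perm_bound hY hV hW ha1 hb1 haY hbY (hSsp p.1 hp1 p.2 hp2 hp12) hm0 hmabs
    calc (((MiD W x).biUnion (fun m =>
        (Mi'D x Y p.1 p.2 m).biUnion (fun m' => KfD Y V p.1 p.2 m m'))).card : ℝ)
        ≤ ∑ m ∈ MiD W x, (3240 * Y * x ^ 2 / V + 45 * W * x) :=
          le_trans h1 (Finset.sum_le_sum h2)
      _ = ((MiD W x).card : ℝ) * (3240 * Y * x ^ 2 / V + 45 * W * x) := by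
          rw [Finset.sum_const, nsmul_eq_mul]
      _ ≤ 9 * W * x * (3240 * Y * x ^ 2 / V + 45 * W * x) :=
          mul_le_mul_of_nonneg_right (MiD_card hW hx) hB0
  rw [FD]
  calc ((S.offDiag.biUnion (fun p => (MiD W x).biUnion (fun m =>
      (Mi'D x Y p.1 p.2 m).biUnion (fun m' => KfD Y V p.1 p.2 m m')))).card : ℝ)
      ≤ ∑ p ∈ S.offDiag, (((MiD W x).biUnion (fun m =>
        (Mi'D x Y p.1 p.2 m).biUnion (fun m' => KfD Y V p.1 p.2 m m'))).card : ℝ) := by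
        exact_mod_cast Finset.card_biUnion_le
    _ ≤ ∑ _p ∈ S.offDiag, (9 * W * x * (3240 * Y * x ^ 2 / V + 45 * W * x)) :=
        Finset.sum_le_sum hinner
    _ = (S.offDiag.card : ℝ) * (9 * W * x * (3240 * Y * x ^ 2 / V + 45 * W * x)) := by
        rw [Finset.sum_const, nsmul_eq_mul]

/-- Values `k ∈ [Y, 2Y)` for which some pair of primes-to-be `d k + 1`, `d' k + 1`
(with `d ≠ d'` from a set `S` of logarithmic spread `> 1`) "clusters", i.e. admits
`ω` with `|ω| < W` making both `ω log(d k + 1)` and `ω log(d' k + 1)` within `1/V`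
of nonzero integers, are rare. -/
theorem clustering_values_are_rare (M : ℕ) (hM : 2 ≤ M) :
    ∃ Y₀ : ℝ, ∀ Y : ℝ, Y₀ ≤ Y →
      ∀ S : Finset ℕ, S.card = M →
        (∀ d ∈ S, 0 < d ∧ (d : ℝ) ≤ Y) →
        (∀ d ∈ S, ∀ d' ∈ S, d ≠ d' → 1 < |Real.log d - Real.log d'|) →
        ∀ V W : ℝ, V ≤ Real.sqrt Y → 1 ≤ W → W ≤ V / (Real.log Y) ^ (M + 5) →
          ({k : ℕ | Y ≤ (k : ℝ) ∧ (k : ℝ) < 2 * Y ∧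
            ∃ d ∈ S, ∃ d' ∈ S, d ≠ d' ∧
              ∃ ω : ℝ, |ω| < W ∧ ∃ m m' : ℤ, m ≠ 0 ∧ m' ≠ 0 ∧
                |ω * Real.log ((d : ℝ) * k + 1) - (m : ℝ)| ≤ 1 / V ∧
                |ω * Real.log ((d' : ℝ) * k + 1) - (m' : ℝ)| ≤ 1 / V}.ncard : ℝ) ≤
          1200 * (M.choose 2) * (W / V) * Y * (Real.log Y) ^ 4 := by
  classical
  refine ⟨Real.exp 100, fun Y hY S hScard hSmem hSsp V W hVsq hW hWV => ?_⟩
  obtain ⟨hY0, hY101, hx, hYx⟩ := Y_facts hY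
  set x := Real.log Y with hxdef
  have hx0 : (0 : ℝ) < x := by linarith
  -- V and W facts
  have hP1 : (1 : ℝ) ≤ x ^ (M + 5) := one_le_pow₀ (by linarith)
  have hPpos : (0 : ℝ) < x ^ (M + 5) := by positivity
  have hWP : W * x ^ (M + 5) ≤ V := by rwa [le_div_iff₀ hPpos] at hWV
  have hVx : x ^ (M + 5) ≤ V := by nlinarith [mul_nonneg (by linarith : (0:ℝ) ≤ W - 1) hPpos.le]
  have hx7 : x ^ 7 ≤ x ^ (M + 5) := pow_le_pow_right₀ (by linarith) (by omega)
  have hxx : x ≤ x ^ 7 := le_self_pow₀ (by linarith) (by norm_num)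
  have hV100 : (100 : ℝ) ≤ V := by linarith
  have hVpos : (0 : ℝ) < V := by linarith
  have hWpos : (0 : ℝ) < W := by linarith
  have hWleV : W ≤ V := by nlinarith [mul_le_mul_of_nonneg_left hP1 hWpos.le]
  have hVY2 : V ^ 2 ≤ Y := by nlinarith [Real.sq_sqrt hY0.le, Real.sqrt_nonneg Y]
  have hWVY : W * V ≤ Y := by nlinarith
  -- inclusion into FD
  have hsub : {k : ℕ | Y ≤ (k : ℝ) ∧ (k : ℝ) < 2 * Y ∧
      ∃ d ∈ S, ∃ d' ∈ S, d ≠ d' ∧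
        ∃ ω : ℝ, |ω| < W ∧ ∃ m m' : ℤ, m ≠ 0 ∧ m' ≠ 0 ∧
          |ω * Real.log ((d : ℝ) * k + 1) - (m : ℝ)| ≤ 1 / V ∧
          |ω * Real.log ((d' : ℝ) * k + 1) - (m' : ℝ)| ≤ 1 / V} ⊆ ↑(FD Y V W x S) := by
    rintro k ⟨hk1, hk2, d, hdS, d', hd'S, hdd', ω, hω, m, m', hm0, hm'0, h1, h2⟩
    obtain ⟨hd1, hdY⟩ := hSmem d hdS
    obtain ⟨hd'1, hd'Y⟩ := hSmem d' hd'S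
    obtain ⟨hLpos, hLb, hLa⟩ := Lb_aux hY0 hY101 hd1 hdY hk1 hk2.le
    obtain ⟨hL'pos, hL'b, hL'a⟩ := Lb_aux hY0 hY101 hd'1 hd'Y hk1 hk2.le
    set L := Real.log ((d : ℝ) * k + 1) with hLdef
    set L' := Real.log ((d' : ℝ) * k + 1) with hL'def
    have hL0 : 0 < L := lt_of_lt_of_le hx0 hLb
    have hL'0 : 0 < L' := lt_of_lt_of_le hx0 hL'b
    have hωW : |ω| ≤ W := hω.le
    have h1V : (1 : ℝ) / V ≤ 1 := by rw [div_le_one hVpos]; linarith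
    have hWx1 : (1 : ℝ) ≤ W * x := by
      nlinarith [mul_le_mul hW (by linarith : (1:ℝ) ≤ x) (by norm_num) (by linarith : (0:ℝ) ≤ W)]
    -- |m| bound
    have hmabs : |(m : ℝ)| ≤ 4 * W * x := by
      have e0 : (m : ℝ) = ω * L + -(ω * L - m) := by ring
      have e0' : |(m : ℝ)| = |ω * L + -(ω * L - (m : ℝ))| := congrArg abs e0
      have e1 : |(m : ℝ)| ≤ |ω * L| + |ω * L - m| := by
        rw [e0']
        refine (abs_add_le _ _).trans ?_
        rw [abs_neg]
      have hLabs : |L| = L := abs_of_pos hL0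
      have e2 : |ω * L| ≤ W * (3 * x) := by
        rw [abs_mul, hLabs]
        exact mul_le_mul hωW hLa hL0.le (by linarith)
      nlinarith
    -- m ∈ MiD
    have hm_le : (m : ℝ) ≤ 4 * W * x := le_trans (le_abs_self _) hmabs
    have hm_ge : -(4 * W * x) ≤ (m : ℝ) := by
      have := neg_abs_le (m : ℝ); linarith
    have hmM : m ∈ MiD W x := by
      rw [MiD, Finset.mem_erase, Finset.mem_Icc]
      refine ⟨hm0, ?_, ?_⟩
      · have hc : ((-⌈4 * W * x⌉ : ℤ) : ℝ) ≤ (m : ℝ) := by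
          push_cast
          have := Int.le_ceil (4 * W * x); linarith
        exact_mod_cast hc
      · have hc : ((m : ℤ) : ℝ) ≤ ((⌈4 * W * x⌉ : ℤ) : ℝ) := by
          have := Int.le_ceil (4 * W * x); linarith
        exact_mod_cast hc
    -- closeness of m' to gfun at k
    have hgid : (m' : ℝ) - gfun d d' m k = ((m' : ℝ) - ω * L') + (ω * L - m) * (L' / L) := by
      simp only [gfun, ← hLdef, ← hL'def]
      field_simp
      ring
    have hgcl : |(m' : ℝ) - gfun d d' m k| ≤ 4 / V := by
      rw [hgid]
      have hs1 : |(m' : ℝ) - ω * L'| ≤ 1 / V := by rw [abs_sub_comm]; exact h2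
      have hs2 : |(ω * L - m) * (L' / L)| ≤ (1 / V) * 3 := by
        rw [abs_mul]
        have hq : |L' / L| = L' / L := abs_of_pos (div_pos hL'0 hL0)
        have hq3 : L' / L ≤ 3 := by rw [div_le_iff₀ hL0]; linarith
        rw [hq]
        exact mul_le_mul h1 hq3 (by positivity) (by positivity)
      calc |((m' : ℝ) - ω * L') + (ω * L - m) * (L' / L)|
          ≤ |(m' : ℝ) - ω * L'| + |(ω * L - m) * (L' / L)| := abs_add_le _ _
        _ ≤ 1 / V + (1 / V) * 3 := add_le_add hs1 hs2
        _ = 4 / V := by ring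
    -- m' ∈ Mi'D
    have hm'M : m' ∈ Mi'D x Y d d' m := by
      have hinc := (increment_bounds' m hY hd1 hd'1 hdY hd'Y
        (hSsp d hdS d' hd'S hdd') (le_refl Y) hk1 hk2.le).2
      have hup : |gfun d d' m k - gfun d d' m Y| ≤ 3 * |(m : ℝ)| / x := by
        refine le_trans hinc ?_
        rw [div_le_div_iff₀ (by positivity) hx0]
        nlinarith [mul_nonneg (mul_nonneg (abs_nonneg (m : ℝ)) hx0.le)
          (by linarith : (0 : ℝ) ≤ 2 * Y - k)]
      have h4V : 4 / V ≤ 1 := by rw [div_le_one hVpos]; linarith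
      have hfin : |(m' : ℝ) - gfun d d' m Y| ≤ 3 * |(m : ℝ)| / x + 1 := by
        have e : (m' : ℝ) - gfun d d' m Y
            = ((m' : ℝ) - gfun d d' m k) + (gfun d d' m k - gfun d d' m Y) := by ring
        rw [e]
        refine le_trans (abs_add_le _ _) ?_
        linarith
      rw [Mi'D, Finset.mem_Icc]
      obtain ⟨hfa, hfb⟩ := abs_le.mp hfin
      constructor
      · apply Int.ceil_le.mpr
        push_cast
        linarith
      · apply Int.le_floor.mpr
        push_cast
        linarith
    -- k ∈ Kfin
    have hkK : k ∈ Kfin Y := by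
      rw [Kfin, Finset.mem_Ico]
      exact ⟨Nat.ceil_le.mpr hk1, Nat.lt_ceil.mpr hk2⟩
    rw [Finset.mem_coe, FD]
    apply Finset.mem_biUnion.mpr
    refine ⟨(d, d'), Finset.mem_offDiag.mpr ⟨hdS, hd'S, hdd'⟩, ?_⟩
    apply Finset.mem_biUnion.mpr
    refine ⟨m, hmM, ?_⟩
    apply Finset.mem_biUnion.mpr
    refine ⟨m', hm'M, ?_⟩
    rw [KfD, Finset.mem_filter]
    exact ⟨hkK, hgcl⟩
  -- counting
  have hstep1 : ({k : ℕ | Y ≤ (k : ℝ) ∧ (k : ℝ) < 2 * Y ∧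
      ∃ d ∈ S, ∃ d' ∈ S, d ≠ d' ∧
        ∃ ω : ℝ, |ω| < W ∧ ∃ m m' : ℤ, m ≠ 0 ∧ m' ≠ 0 ∧
          |ω * Real.log ((d : ℝ) * k + 1) - (m : ℝ)| ≤ 1 / V ∧
          |ω * Real.log ((d' : ℝ) * k + 1) - (m' : ℝ)| ≤ 1 / V}.ncard : ℝ) ≤
      ((FD Y V W x S).card : ℝ) := by
    have h2 := Set.ncard_le_ncard hsub (FD Y V W x S).finite_toSet
    rw [Set.ncard_coe_finset] at h2
    exact_mod_cast h2
  have hoff : (S.offDiag.card : ℝ) = (M : ℝ) * M - M := by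
    rw [Finset.offDiag_card, hScard]
    have hMM : M ≤ M * M := Nat.le_mul_of_pos_left M (by omega)
    push_cast [Nat.cast_sub hMM]
    ring
  have hM2 : (2 : ℝ) ≤ (M : ℝ) := by exact_mod_cast hM
  have hkey : 9 * W * x * (3240 * Y * x ^ 2 / V + 45 * W * x) ≤ 600 * (W / V) * Y * x ^ 4 := by
    have e1 : 9 * W * x * (3240 * Y * x ^ 2 / V + 45 * W * x)
        = (29160 * W * Y * x ^ 3 + 405 * W ^ 2 * x ^ 2 * V) / V := by
      field_simp
      ring
    have e2 : 600 * (W / V) * Y * x ^ 4 = 600 * W * Y * x ^ 4 / V := by ring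
    rw [e1, e2, div_le_div_iff₀ hVpos hVpos]
    have hh1 : W * V * (W * x ^ 2) ≤ Y * (W * x ^ 2) :=
      mul_le_mul_of_nonneg_right hWVY (by positivity)
    have hh2 : (0 : ℝ) ≤ W * Y * x ^ 2 * (5 * x - 405) :=
      mul_nonneg (by positivity) (by linarith)
    have hh3 : (0 : ℝ) ≤ W * Y * x ^ 3 * (600 * x - 29165) :=
      mul_nonneg (by positivity) (by linarith)
    nlinarith [hh1, hh2, hh3, mul_pos hVpos hVpos]
  have hfd := FD_bound hY hVpos hW hSmem hSsp
  rw [hoff] at hfd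
  have hMM0 : (0 : ℝ) ≤ (M : ℝ) * M - M := by nlinarith
  have hfinal : ((M : ℝ) * M - M) *
      (9 * W * x * (3240 * Y * x ^ 2 / V + 45 * W * x)) ≤
      ((M : ℝ) * M - M) * (600 * (W / V) * Y * x ^ 4) :=
    mul_le_mul_of_nonneg_left hkey hMM0
  have hchoose : ((M.choose 2 : ℕ) : ℝ) = (M : ℝ) * ((M : ℝ) - 1) / 2 := by
    rw [Nat.cast_choose_two]
  have heq : ((M : ℝ) * M - M) * (600 * (W / V) * Y * x ^ 4)
      = 1200 * (M.choose 2) * (W / V) * Y * x ^ 4 := by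
    rw [hchoose]
    ring
  calc ({k : ℕ | Y ≤ (k : ℝ) ∧ (k : ℝ) < 2 * Y ∧
      ∃ d ∈ S, ∃ d' ∈ S, d ≠ d' ∧
        ∃ ω : ℝ, |ω| < W ∧ ∃ m m' : ℤ, m ≠ 0 ∧ m' ≠ 0 ∧
          |ω * Real.log ((d : ℝ) * k + 1) - (m : ℝ)| ≤ 1 / V ∧
          |ω * Real.log ((d' : ℝ) * k + 1) - (m' : ℝ)| ≤ 1 / V}.ncard : ℝ)
      ≤ ((FD Y V W x S).card : ℝ) := hstep1
    _ ≤ ((M : ℝ) * M - M) * (9 * W * x * (3240 * Y * x ^ 2 / V + 45 * W * x)) := hfd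
    _ ≤ ((M : ℝ) * M - M) * (600 * (W / V) * Y * x ^ 4) := hfinal
    _ = 1200 * (M.choose 2) * (W / V) * Y * x ^ 4 := heq
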